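/- Let a > 0, d > 0 with 2d ≥ a, c ≥ 0, and an integer T ≥ 1. Set κ = 2d/a, stepsizes η^k = 2/(a(κ + k)), weights w^k = κ + k, and W^T = Σ_{k=0}^T w^k. If (r^k)_{k≥0}, (s^k)_{k≥0} are nonnegative real sequences satisfying r^{k+1} ≤ (1 − aη^k)·r^k − η^k·s^k + (η^k)²·c for all 0 ≤ k ≤ T, then (1/W^T)·Σ_{k=0}^T s^k w^k + a·r^{T+1} ≤ 2aκ²r⁰/T² + 8c/(aT). -/

import Mathlib

set_option maxHeartbeats 1600000 in
/-- decreasing-stepsize sequence lemma. With `a > 0`, `d > 0`, `2d ≥ a`,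
`c ≥ 0`, `T ≥ 1`, `κ = 2d/a`, stepsizes `η^k = 2/(a(κ+k))`, weights `w^k = κ + k`,
any nonnegative sequences `(r^k)`, `(s^k)` satisfying
`r^{k+1} ≤ (1 − aη^k) r^k − η^k s^k + (η^k)² c` for `0 ≤ k ≤ T` obey
`(1/W^T) Σ_{k=0}^T s^k w^k + a r^{T+1} ≤ 2aκ²r⁰/T² + 8c/(aT)`. -/
theorem sequence_lemma_decreasing_stepsize (a c d : ℝ) (ha : 0 < a) (hd : 0 < d)
    (h2d : a ≤ 2 * d) (hc : 0 ≤ c) (T : ℕ) (hT : 1 ≤ T)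
    (κ : ℝ) (hκ : κ = 2 * d / a)
    (η w : ℕ → ℝ)
    (hη : ∀ k, η k = 2 / (a * (κ + k)))
    (hw : ∀ k, w k = κ + k)
    (r s : ℕ → ℝ) (hr : ∀ k, 0 ≤ r k) (hs : ∀ k, 0 ≤ s k)
    (hrec : ∀ k ≤ T, r (k + 1) ≤ (1 - a * η k) * r k - η k * s k + (η k) ^ 2 * c) :
    (1 / ∑ k ∈ Finset.range (T + 1), w k) * (∑ k ∈ Finset.range (T + 1), s k * w k)
        + a * r (T + 1)
      ≤ 2 * a * κ ^ 2 * r 0 / (T : ℝ) ^ 2 + 8 * c / (a * T) := by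
  have ha' : a ≠ 0 := ne_of_gt ha
  have hκ1 : 1 ≤ κ := by rw [hκ, le_div_iff₀ ha]; linarith
  have hx : ∀ n : ℕ, 0 < κ + (n : ℝ) := by
    intro n
    have : (0:ℝ) ≤ n := Nat.cast_nonneg n
    linarith
  -- key telescoped inequality
  have key : ∀ n, n ≤ T + 1 →
      (∑ k ∈ Finset.range n, s k * w k) + a * (κ + n - 1) ^ 2 / 2 * r n
        ≤ a * (κ - 1) ^ 2 / 2 * r 0 + n * (2 * c / a) := by
    intro n hn
    induction n with
    | zero => simp
    | succ m ih =>
      have hm : m ≤ T := Nat.lt_succ_iff.mp hn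
      have ihm := ih (Nat.le_succ_of_le hm)
      rw [Finset.sum_range_succ]
      have hx0 : 0 < κ + (m : ℝ) := hx m
      have hx0' : κ + (m : ℝ) ≠ 0 := ne_of_gt hx0
      have hA : (0:ℝ) < a * (κ + (m:ℝ)) ^ 2 / 2 := by positivity
      have h2 := mul_le_mul_of_nonneg_left (hrec m hm) (le_of_lt hA)
      have h3 : a * (κ + (m:ℝ)) ^ 2 / 2 * ((1 - a * η m) * r m - η m * s m + (η m) ^ 2 * c)
          = a * (κ + (m:ℝ)) * (κ + (m:ℝ) - 2) / 2 * r m - (κ + (m:ℝ)) * s m + 2 * c / a := by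
        rw [hη m]
        field_simp
      rw [h3] at h2
      have hstep : s m * w m + a * (κ + ((m:ℝ) + 1) - 1) ^ 2 / 2 * r (m + 1)
          ≤ a * (κ + (m:ℝ) - 1) ^ 2 / 2 * r m + 2 * c / a := by
        rw [hw m]
        nlinarith [h2, mul_nonneg ha.le (hr m)]
      push_cast
      push_cast at ihm
      linarith
  have hTpos : (0:ℝ) < (T:ℝ) := by exact_mod_cast Nat.lt_of_lt_of_le Nat.zero_lt_one hT
  have hT1 : (1:ℝ) ≤ (T:ℝ) := by exact_mod_cast hT
  -- value of W
  have hWval : (∑ k ∈ Finset.range (T + 1), w k) = ((T:ℝ) + 1) * κ + (T:ℝ) * ((T:ℝ) + 1) / 2 := by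
    have h1 : (∑ k ∈ Finset.range (T + 1), w k) = ∑ k ∈ Finset.range (T + 1), (κ + (k:ℝ)) :=
      Finset.sum_congr rfl (fun k _ => hw k)
    rw [h1, Finset.sum_add_distrib, Finset.sum_const, Finset.card_range]
    have h2 : (∑ k ∈ Finset.range (T + 1), (k:ℝ)) = (T:ℝ) * ((T:ℝ) + 1) / 2 := by
      have h3 := Finset.sum_range_id_mul_two (T + 1)
      have h4 : ((∑ i ∈ Finset.range (T + 1), i : ℕ) : ℝ) * 2 = ((T:ℝ) + 1) * (T:ℝ) := by
        exact_mod_cast congrArg (Nat.cast : ℕ → ℝ) h3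
      push_cast at h4 ⊢
      linarith
    rw [h2]
    push_cast
    ring
  set W := ∑ k ∈ Finset.range (T + 1), w k with hWdef
  have hWpos : 0 < W := by rw [hWval]; nlinarith
  set SW := ∑ k ∈ Finset.range (T + 1), s k * w k with hSWdef
  have hSWnn : 0 ≤ SW := by
    apply Finset.sum_nonneg
    intro k _
    exact mul_nonneg (hs k) (by rw [hw k]; exact (hx k).le)
  have hkey := key (T + 1) le_rfl
  push_cast at hkey
  set B1 := a * (κ - 1) ^ 2 / 2 * r 0 with hB1def
  set B2 := ((T:ℝ) + 1) * (2 * c / a) with hB2def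
  have hArT : a * (κ + (T:ℝ)) ^ 2 / 2 * r (T + 1) ≥ 0 :=
    mul_nonneg (by positivity) (hr (T + 1))
  have hkey' : SW + a * (κ + (T:ℝ)) ^ 2 / 2 * r (T + 1) ≤ B1 + B2 := by
    rw [hB1def, hB2def]; linarith [hkey]
  have hSW : SW ≤ B1 + B2 := by linarith
  have hRt : a * (κ + (T:ℝ)) ^ 2 / 2 * r (T + 1) ≤ B1 + B2 := by linarith
  have hxT : 0 < κ + (T:ℝ) := hx T
  have hxT2 : (0:ℝ) < (κ + (T:ℝ)) ^ 2 := by positivity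
  have haR : a * r (T + 1) ≤ 2 * (B1 + B2) / (κ + (T:ℝ)) ^ 2 := by
    rw [le_div_iff₀ hxT2]
    nlinarith [hRt]
  have h1W : (1 / W) * SW ≤ (B1 + B2) / W := by
    rw [one_div, inv_mul_eq_div]
    gcongr
  have hB1nn : 0 ≤ B1 := mul_nonneg (by positivity) (hr 0)
  have haT : (0:ℝ) < a * (T:ℝ) := by positivity
  have hT2 : (0:ℝ) < (T:ℝ) ^ 2 := by positivity
  have hk2 : (κ - 1) ^ 2 ≤ κ ^ 2 := by nlinarith
  have hP1 : B1 / W ≤ a * κ ^ 2 * r 0 / (T:ℝ) ^ 2 := by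
    rw [div_le_div_iff₀ hWpos hT2, hB1def]
    have hW2 : (T:ℝ) ^ 2 / 2 ≤ W := by rw [hWval]; nlinarith
    have hprod : (κ - 1) ^ 2 * ((T:ℝ) ^ 2 / 2) ≤ κ ^ 2 * W :=
      mul_le_mul hk2 hW2 (by positivity) (sq_nonneg κ)
    nlinarith [mul_le_mul_of_nonneg_left hprod (mul_nonneg ha.le (hr 0))]
  have hP2 : B2 / W ≤ 4 * c / (a * (T:ℝ)) := by
    rw [div_le_div_iff₀ hWpos haT, hB2def]
    have he : ((T:ℝ) + 1) * (2 * c / a) * (a * (T:ℝ)) = 2 * c * (T:ℝ) * ((T:ℝ) + 1) := by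
      field_simp
    rw [he, hWval]
    nlinarith [mul_nonneg hc (mul_nonneg (by linarith : (0:ℝ) ≤ (T:ℝ) + 1) (by linarith : (0:ℝ) ≤ κ))]
  have hP3 : 2 * B1 / (κ + (T:ℝ)) ^ 2 ≤ a * κ ^ 2 * r 0 / (T:ℝ) ^ 2 := by
    rw [div_le_div_iff₀ hxT2 hT2, hB1def]
    have hT2' : (T:ℝ) ^ 2 ≤ (κ + (T:ℝ)) ^ 2 := by nlinarith
    have hprod : (κ - 1) ^ 2 * (T:ℝ) ^ 2 ≤ κ ^ 2 * (κ + (T:ℝ)) ^ 2 :=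
      mul_le_mul hk2 hT2' (by positivity) (sq_nonneg κ)
    nlinarith [mul_le_mul_of_nonneg_left hprod (mul_nonneg ha.le (hr 0))]
  have hP4 : 2 * B2 / (κ + (T:ℝ)) ^ 2 ≤ 4 * c / (a * (T:ℝ)) := by
    rw [div_le_div_iff₀ hxT2 haT, hB2def]
    have he : 2 * (((T:ℝ) + 1) * (2 * c / a)) * (a * (T:ℝ)) = 4 * c * (T:ℝ) * ((T:ℝ) + 1) := by
      field_simp; ring
    rw [he]
    nlinarith [mul_nonneg hc (by nlinarith : (0:ℝ) ≤ κ ^ 2 + 2 * κ * (T:ℝ) - (T:ℝ))]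
  have hsplit1 : (B1 + B2) / W = B1 / W + B2 / W := add_div _ _ _
  have hsplit2 : 2 * (B1 + B2) / (κ + (T:ℝ)) ^ 2
      = 2 * B1 / (κ + (T:ℝ)) ^ 2 + 2 * B2 / (κ + (T:ℝ)) ^ 2 := by ring
  clear_value W SW B1 B2
  have e1 : a * κ ^ 2 * r 0 / (T:ℝ) ^ 2 + a * κ ^ 2 * r 0 / (T:ℝ) ^ 2
      = 2 * a * κ ^ 2 * r 0 / (T:ℝ) ^ 2 := by ring
  have e2 : 4 * c / (a * (T:ℝ)) + 4 * c / (a * (T:ℝ)) = 8 * c / (a * (T:ℝ)) := by ring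
  linarith
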